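/- arXiv:2507.22559 — 7 statements merged into one kernel-verified Lean document; each statement's English description precedes it below -/
import Mathlib

section
/- Let T be Hermitian involutory with {T,H}=0, and let |v₀⟩ satisfy T|v₀⟩ = c|v₀⟩ with c ∈ {+1,-1}. Define |v(t)⟩ = exp(-itH)|v₀⟩. Then for all real tₐ, t_b, with h = (t_b - tₐ)/2, one has ⟨v(tₐ)|v(t_b)⟩ = c⟨v(h)|T|v(h)⟩, and this quantity is real. -/
open Matrix

/-- With `T` Hermitian involutory, `{T,H}=0`, `T|v₀⟩ = c|v₀⟩` (`c = ±1`),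
`|v(t)⟩ = exp(-itH)|v₀⟩`: for all `tₐ, t_b`, with `h = (t_b - tₐ)/2`,
`⟨v(tₐ)|v(t_b)⟩ = c⟨v(h)|T|v(h)⟩` and this quantity is real. -/
theorem stmt_1 (n : ℕ) (H T : Matrix (Fin n) (Fin n) ℂ)
    (hT : Tᴴ = T) (hT2 : T * T = 1) (hH : Hᴴ = H)
    (hanti : T * H = -(H * T))
    (v₀ : Fin n → ℂ) (hv₀ : star v₀ ⬝ᵥ v₀ = 1)
    (c : ℝ) (hc : c = 1 ∨ c = -1)
    (hstab : T.mulVec v₀ = (c : ℂ) • v₀)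
    (v : ℝ → Fin n → ℂ)
    (hv : ∀ t : ℝ, v t = (NormedSpace.exp ((-(Complex.I * (t : ℂ))) • H)).mulVec v₀)
    (ta tb : ℝ) :
    star (v ta) ⬝ᵥ v tb =
        (c : ℂ) * (star (v ((tb - ta) / 2)) ⬝ᵥ T.mulVec (v ((tb - ta) / 2))) ∧
      (star (v ta) ⬝ᵥ v tb).im = 0 := by
  set E : ℝ → Matrix (Fin n) (Fin n) ℂ :=
    fun t => NormedSpace.exp ((-(Complex.I * (t : ℂ))) • H) with hE
  have hc2 : (c : ℂ) * (c : ℂ) = 1 := by rcases hc with h | h <;> simp [h]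
  have hmul : ∀ s t : ℝ, E s * E t = E (s + t) := by
    intro s t
    rw [hE]
    dsimp only
    rw [← Matrix.exp_add_of_commute _ _ (((Commute.refl H).smul_left _).smul_right _)]
    congr 1
    rw [← add_smul]
    congr 1
    push_cast
    ring
  have hadj : ∀ t : ℝ, (E t)ᴴ = E (-t) := by
    intro t
    rw [hE]
    dsimp only
    rw [← Matrix.exp_conjTranspose, Matrix.conjTranspose_smul, hH]
    congr 1
    simp [Complex.ext_iff]
  have hTHT : T * H * T = -H := by
    rw [hanti, neg_mul, mul_assoc, hT2, mul_one]
  have hconjE : ∀ t : ℝ, T * E t * T = E (-t) := by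
    intro t
    have := Matrix.exp_units_conj (⟨T, T, hT2, hT2⟩ : (Matrix (Fin n) (Fin n) ℂ)ˣ)
      ((-(Complex.I * (t : ℂ))) • H)
    simp only [Units.inv_mk] at this
    rw [hE]
    dsimp only
    rw [← this]
    congr 1
    rw [Matrix.mul_smul, Matrix.smul_mul, hTHT]
    rw [smul_neg, ← neg_smul]
    congr 1
    push_cast
    ring
  have hTE : ∀ t : ℝ, T * E t = E (-t) * T := by
    intro t
    calc T * E t = T * E t * (T * T) := by rw [hT2, mul_one]
      _ = (T * E t * T) * T := by noncomm_ring
      _ = E (-t) * T := by rw [hconjE]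
  have hstab' : star v₀ ᵥ* T = (c : ℂ) • star v₀ := by
    have h1 := congrArg star hstab
    rw [Matrix.star_mulVec, hT] at h1
    rw [h1, star_smul]
    simp
  have key : ∀ M : Matrix (Fin n) (Fin n) ℂ,
      star v₀ ⬝ᵥ (T * M) *ᵥ v₀ = (c : ℂ) * (star v₀ ⬝ᵥ M *ᵥ v₀) := by
    intro M
    rw [Matrix.dotProduct_mulVec, ← Matrix.vecMul_vecMul, hstab', Matrix.smul_vecMul,
      smul_dotProduct, ← Matrix.dotProduct_mulVec, smul_eq_mul]
  have key2 : ∀ M : Matrix (Fin n) (Fin n) ℂ,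
      star v₀ ⬝ᵥ (M * T) *ᵥ v₀ = (c : ℂ) * (star v₀ ⬝ᵥ M *ᵥ v₀) := by
    intro M
    rw [← Matrix.mulVec_mulVec, hstab, Matrix.mulVec_smul, dotProduct_smul]
    simp
  have hv' : ∀ t : ℝ, v t = (E t) *ᵥ v₀ := hv
  have hinner : ∀ s t : ℝ, ∀ M : Matrix (Fin n) (Fin n) ℂ,
      star (v s) ⬝ᵥ M *ᵥ (v t) = star v₀ ⬝ᵥ (E (-s) * M * E t) *ᵥ v₀ := by
    intro s t M
    rw [hv', hv', Matrix.star_mulVec, hadj]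
    rw [Matrix.dotProduct_mulVec, Matrix.vecMul_vecMul,
      Matrix.dotProduct_mulVec, Matrix.vecMul_vecMul, ← Matrix.dotProduct_mulVec]
  have hL : star (v ta) ⬝ᵥ v tb = star v₀ ⬝ᵥ (E (tb - ta)) *ᵥ v₀ := by
    have h1 : star (v ta) ⬝ᵥ v tb = star (v ta) ⬝ᵥ (1 : Matrix (Fin n) (Fin n) ℂ) *ᵥ v tb := by
      rw [Matrix.one_mulVec]
    rw [h1, hinner, mul_one, hmul]
    congr 2
    ring
  have hsymm : ∀ s : ℝ, star v₀ ⬝ᵥ (E (-s)) *ᵥ v₀ = star v₀ ⬝ᵥ (E s) *ᵥ v₀ := by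
    intro s
    rw [← hconjE, mul_assoc, key, key2, ← mul_assoc, hc2, one_mul]
  have hR : star (v ((tb - ta) / 2)) ⬝ᵥ T *ᵥ (v ((tb - ta) / 2)) =
      star v₀ ⬝ᵥ (T * E (tb - ta)) *ᵥ v₀ := by
    have harg : (-((tb - ta) / 2)) + -((tb - ta) / 2) = -(tb - ta) := by ring
    rw [hinner, mul_assoc, hTE, ← mul_assoc, hmul, harg, ← hTE]
  have hmain : star (v ta) ⬝ᵥ v tb =
      (c : ℂ) * (star (v ((tb - ta) / 2)) ⬝ᵥ T.mulVec (v ((tb - ta) / 2))) := by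
    rw [hL, hR, key, ← mul_assoc, hc2, one_mul]
  refine ⟨hmain, ?_⟩
  have hconj : (starRingEnd ℂ) (star (v ta) ⬝ᵥ v tb) = star (v ta) ⬝ᵥ v tb := by
    have h1 : (starRingEnd ℂ) (star v₀ ⬝ᵥ (E (tb - ta)) *ᵥ v₀) =
        star v₀ ⬝ᵥ ((E (tb - ta))ᴴ) *ᵥ v₀ := by
      rw [Matrix.star_dotProduct]
      rw [show (starRingEnd ℂ) (star (star (E (tb - ta) *ᵥ v₀) ⬝ᵥ v₀)) =
        star (E (tb - ta) *ᵥ v₀) ⬝ᵥ v₀ from star_star _]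
      rw [Matrix.star_mulVec, ← Matrix.dotProduct_mulVec]
    rw [hL, h1, hadj, hsymm]
  rw [← Complex.conj_eq_iff_im]
  exact hconj
end

section
/- Let T be Hermitian involutory with {T,H}=0 and T|v₀⟩ = c|v₀⟩, c ∈ {±1}. Let K be a Hermitian operator with [K,H]=0 and {K,T}=0. Then for all real tₐ, t_b, with h = (t_b - tₐ)/2, ⟨v(tₐ)|K|v(t_b)⟩ = i·c·⟨v(h)|(iKT)|v(h)⟩, and this quantity is purely imaginary. Moreover iKT is Hermitian. -/
open Matrix

/-- With `T` Hermitian involutory, `{T,H}=0`, `T|v₀⟩ = c|v₀⟩` (`c = ±1`), and `K` Hermitian with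
`[K,H]=0`, `{K,T}=0`: for all `tₐ, t_b`, with `h = (t_b - tₐ)/2`,
`⟨v(tₐ)|K|v(t_b)⟩ = i c ⟨v(h)|(iKT)|v(h)⟩`, this quantity is purely imaginary,
and `iKT` is Hermitian. -/
theorem stmt_2 (n : ℕ) (H T K : Matrix (Fin n) (Fin n) ℂ)
    (hT : Tᴴ = T) (hT2 : T * T = 1) (hH : Hᴴ = H) (hK : Kᴴ = K)
    (hantiTH : T * H = -(H * T))
    (hcomm : K * H = H * K) (hantiKT : K * T = -(T * K))
    (v₀ : Fin n → ℂ) (hv₀ : star v₀ ⬝ᵥ v₀ = 1)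
    (c : ℝ) (hc : c = 1 ∨ c = -1)
    (hstab : T.mulVec v₀ = (c : ℂ) • v₀)
    (v : ℝ → Fin n → ℂ)
    (hv : ∀ t : ℝ, v t = (NormedSpace.exp ((-(Complex.I * (t : ℂ))) • H)).mulVec v₀)
    (ta tb : ℝ) :
    star (v ta) ⬝ᵥ K.mulVec (v tb) =
        Complex.I * (c : ℂ) *
          (star (v ((tb - ta) / 2)) ⬝ᵥ (Complex.I • (K * T)).mulVec (v ((tb - ta) / 2))) ∧
      (star (v ta) ⬝ᵥ K.mulVec (v tb)).re = 0 ∧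
      (Complex.I • (K * T))ᴴ = Complex.I • (K * T) := by
  have hTK : T * K = -(K * T) := by rw [hantiKT, neg_neg]
  have hHT : H * T = -(T * H) := by rw [hantiTH, neg_neg]
  have hTunit : IsUnit T := ⟨⟨T, T, hT2, hT2⟩, rfl⟩
  have hTinv : T⁻¹ = T := Matrix.inv_eq_right_inv hT2
  set U : ℝ → Matrix (Fin n) (Fin n) ℂ :=
    fun t => NormedSpace.exp ((-(Complex.I * (t : ℂ))) • H) with hU
  have hUadj : ∀ t : ℝ, (U t)ᴴ = U (-t) := by
    intro t
    rw [hU]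
    simp only
    rw [← Matrix.exp_conjTranspose, Matrix.conjTranspose_smul, hH]
    congr 1
    push_cast
    simp [Complex.star_def, Complex.conj_ofReal]
  have hUmul : ∀ a b : ℝ, U a * U b = U (a + b) := by
    intro a b
    rw [hU]
    simp only
    rw [← Matrix.exp_add_of_commute (-(Complex.I * (a : ℂ)) • H) (-(Complex.I * (b : ℂ)) • H) (((Commute.refl H).smul_left _).smul_right _)]
    congr 1
    rw [← add_smul]
    congr 1
    push_cast
    ring
  have hKU : ∀ t : ℝ, K * U t = U t * K := by
    intro t
    exact (((show Commute K H from hcomm).smul_right _).exp_right).eq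
  have hTUT : ∀ t : ℝ, T * U t * T = U (-t) := by
    intro t
    have h1 := Matrix.exp_conj T ((-(Complex.I * (t : ℂ))) • H) hTunit
    rw [hTinv] at h1
    rw [hU]
    simp only
    rw [← h1]
    congr 1
    rw [Matrix.mul_smul, Matrix.smul_mul, hantiTH, Matrix.neg_mul, Matrix.mul_assoc, hT2,
      Matrix.mul_one]
    rw [smul_neg, ← neg_smul]
    congr 1
    push_cast
    ring
  have hTU : ∀ t : ℝ, T * U t = U (-t) * T := by
    intro t
    calc T * U t = T * U t * (T * T) := by rw [hT2, Matrix.mul_one]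
    _ = (T * U t * T) * T := by rw [Matrix.mul_assoc (T * U t)]
    _ = U (-t) * T := by rw [hTUT]
  set f : Matrix (Fin n) (Fin n) ℂ → ℂ := fun M => star v₀ ⬝ᵥ M.mulVec v₀ with hf
  have hdot : ∀ (A B : Matrix (Fin n) (Fin n) ℂ) (x y : Fin n → ℂ),
      star (A.mulVec x) ⬝ᵥ B.mulVec y = star x ⬝ᵥ (Aᴴ * B).mulVec y := by
    intro A B x y
    rw [Matrix.star_mulVec, Matrix.dotProduct_mulVec, Matrix.dotProduct_mulVec,
      Matrix.vecMul_vecMul]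
  have hfsmul : ∀ (a : ℂ) (M : Matrix (Fin n) (Fin n) ℂ), f (a • M) = a * f M := by
    intro a M
    simp [hf, Matrix.smul_mulVec]
  have hfneg : ∀ (M : Matrix (Fin n) (Fin n) ℂ), f (-M) = -f M := by
    intro M
    simp [hf, Matrix.neg_mulVec]
  have hfTr : ∀ M : Matrix (Fin n) (Fin n) ℂ, f (M * T) = (c : ℂ) * f M := by
    intro M
    simp only [hf]
    rw [← Matrix.mulVec_mulVec, hstab, Matrix.mulVec_smul]
    simp
  have hstarT : Matrix.vecMul (star v₀) T = (c : ℂ) • star v₀ := by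
    have := congrArg star hstab
    rw [Matrix.star_mulVec, hT, star_smul] at this
    rw [this]
    simp [Complex.star_def, Complex.conj_ofReal]
  have hfTl : ∀ M : Matrix (Fin n) (Fin n) ℂ, f (T * M) = (c : ℂ) * f M := by
    intro M
    simp only [hf]
    rw [← Matrix.mulVec_mulVec, Matrix.dotProduct_mulVec, hstarT, smul_dotProduct]
    simp
  have hc2 : (c : ℂ) * (c : ℂ) = 1 := by rcases hc with h | h <;> norm_num [h]
  have hkey : ∀ r : ℝ, f (K * U r) = - f (K * U (-r)) := by
    intro r
    have h1 : f (T * (K * U r)) = (c : ℂ) * f (K * U r) := hfTl _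
    have h2 : T * (K * U r) = -((K * U (-r)) * T) := by
      rw [← Matrix.mul_assoc, hTK, Matrix.neg_mul, Matrix.mul_assoc, hTU r, ← Matrix.mul_assoc]
    rw [h2, hfneg, hfTr] at h1
    linear_combination (-(c : ℂ)) * h1 - (f (K * U r) + f (K * U (-r))) * hc2
  have hveq : ∀ t : ℝ, v t = (U t).mulVec v₀ := fun t => hv t
  have hLHS : star (v ta) ⬝ᵥ K.mulVec (v tb) = f (K * U (tb - ta)) := by
    rw [hveq, hveq, Matrix.mulVec_mulVec, hdot, ← Matrix.mul_assoc, hUadj, ← hKU,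
      Matrix.mul_assoc, hUmul]
    rw [show -ta + tb = tb - ta by ring]
  have hRHS : star (v ((tb - ta) / 2)) ⬝ᵥ (Complex.I • (K * T)).mulVec (v ((tb - ta) / 2)) =
      Complex.I * ((c : ℂ) * f (K * U (-(tb - ta)))) := by
    set h : ℝ := (tb - ta) / 2 with hh
    rw [hveq, Matrix.mulVec_mulVec, hdot]
    have hmat : (U h)ᴴ * (Complex.I • (K * T) * U h) =
        Complex.I • (K * U (-(tb - ta)) * T) := by
      rw [hUadj, Matrix.smul_mul, Matrix.mul_smul]
      congr 1
      calc U (-h) * (K * T * U h) = U (-h) * (K * (U (-h) * T)) := by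
            rw [Matrix.mul_assoc K, hTU]
      _ = (U (-h) * K) * (U (-h) * T) := by rw [← Matrix.mul_assoc]
      _ = (K * U (-h)) * (U (-h) * T) := by rw [hKU]
      _ = K * (U (-h) * U (-h)) * T := by
            simp only [Matrix.mul_assoc]
      _ = K * U (-(tb - ta)) * T := by
            rw [hUmul, show -h + -h = -(tb - ta) by rw [hh]; ring]
    rw [hmat]
    show f (Complex.I • (K * U (-(tb - ta)) * T)) = _
    rw [hfsmul, hfTr]
  constructor
  · rw [hLHS, hRHS, hkey (tb - ta)]
    have hI := Complex.I_mul_I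
    linear_combination (-(f (K * U (-(tb - ta)))) * (c : ℂ) * (c : ℂ)) * hI +
      f (K * U (-(tb - ta))) * hc2
  refine ⟨?_, ?_⟩
  · have hfstar : ∀ M : Matrix (Fin n) (Fin n) ℂ, star (f M) = f Mᴴ := by
      intro M
      simp only [hf]
      rw [star_dotProduct, star_star, Matrix.star_mulVec, ← Matrix.dotProduct_mulVec]
    have hadj : (K * U (tb - ta))ᴴ = K * U (-(tb - ta)) := by
      rw [Matrix.conjTranspose_mul, hUadj, hK, ← hKU]
    have h1 : star (f (K * U (tb - ta))) = - f (K * U (tb - ta)) := by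
      rw [hfstar, hadj]
      linear_combination hkey (tb - ta)
    rw [hLHS]
    have h2 := congrArg Complex.re h1
    simp only [Complex.star_def, Complex.conj_re, Complex.neg_re] at h2
    linarith
  · rw [Matrix.conjTranspose_smul, Matrix.conjTranspose_mul, hT, hK, hTK]
    simp [Complex.star_def, Complex.conj_I]
end

section
/- Let T be Hermitian involutory with {T,H}=0, P = (T+I)/2, P⊥ = (I-T)/2, U = exp(-itH), √U = exp(-i(t/2)H). Then PUP = P(√U)†T(√U)P and P⊥UP⊥ = -P⊥(√U)†T(√U)P⊥. -/
open Matrix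

/-- With `T` Hermitian involutory, `{T,H}=0`, `P = (T+I)/2`, `P⊥ = (I-T)/2`, `U = exp(-itH)`,
`√U = exp(-i(t/2)H)`: `PUP = P(√U)†T(√U)P` and `P⊥UP⊥ = -P⊥(√U)†T(√U)P⊥`. -/
theorem stmt_8 (n : ℕ) (H T : Matrix (Fin n) (Fin n) ℂ)
    (hT : Tᴴ = T) (hT2 : T * T = 1) (hH : Hᴴ = H)
    (hanti : T * H = -(H * T))
    (P Pperp : Matrix (Fin n) (Fin n) ℂ)
    (hP : P = (2⁻¹ : ℂ) • (T + 1)) (hPperp : Pperp = (2⁻¹ : ℂ) • (1 - T))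
    (t : ℝ) (U sqrtU : Matrix (Fin n) (Fin n) ℂ)
    (hU : U = NormedSpace.exp ((-(Complex.I * (t : ℂ))) • H))
    (hsqrtU : sqrtU = NormedSpace.exp ((-(Complex.I * ((t / 2 : ℝ) : ℂ))) • H)) :
    P * U * P = P * sqrtUᴴ * T * sqrtU * P ∧
      Pperp * U * Pperp = -(Pperp * sqrtUᴴ * T * sqrtU * Pperp) := by
  have hTinv : T⁻¹ = T := Matrix.inv_eq_right_inv hT2
  have hTunit : IsUnit T := (Matrix.isUnit_iff_isUnit_det T).mpr (IsUnit.of_mul_eq_one _ (by rw [← Matrix.det_mul, hT2, Matrix.det_one]))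
  -- key conjugation lemma
  have key : ∀ a : ℂ, T * NormedSpace.exp (a • H) =
      NormedSpace.exp ((-a) • H) * T := by
    intro a
    have hc : T * (a • H) * T⁻¹ = (-a) • H := by
      rw [hTinv]
      calc T * (a • H) * T = a • (T * H * T) := by
            rw [Matrix.mul_smul, Matrix.smul_mul]
        _ = a • (-(H * (T * T))) := by rw [hanti, Matrix.neg_mul, Matrix.mul_assoc]
        _ = (-a) • H := by rw [hT2, mul_one, smul_neg, ← neg_smul]
    have := Matrix.exp_conj T (a • H) hTunit
    rw [hc, hTinv] at this
    rw [this, Matrix.mul_assoc, hT2, Matrix.mul_one]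
  have half : ((t / 2 : ℝ) : ℂ) = (t : ℂ) / 2 := by push_cast; ring
  -- sqrtUᴴ
  have hadj : sqrtUᴴ = NormedSpace.exp ((Complex.I * ((t / 2 : ℝ) : ℂ)) • H) := by
    rw [hsqrtU, ← Matrix.exp_conjTranspose, Matrix.conjTranspose_smul, hH]
    congr 1
    simp [half, Complex.ext_iff]
  -- sqrtUᴴ * T = T * sqrtU
  have hTsU : T * sqrtU = sqrtUᴴ * T := by
    rw [hadj, hsqrtU, key, neg_neg]
  -- sqrtU * sqrtU = U
  have hsq : sqrtU * sqrtU = U := by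
    rw [hsqrtU, hU, ← Matrix.exp_add_of_commute _ _ (Commute.refl _)]
    congr 1
    rw [← add_smul]
    congr 1
    rw [half]; ring
  have hmid : sqrtUᴴ * T * sqrtU = T * U := by
    rw [← hTsU, Matrix.mul_assoc, hsq]
  have hPT : P * T = P := by
    rw [hP, Matrix.smul_mul]
    congr 1
    rw [Matrix.add_mul, hT2, Matrix.one_mul, add_comm]
  have hPpT : Pperp * T = -Pperp := by
    rw [hPperp, Matrix.smul_mul, ← smul_neg]
    congr 1
    rw [Matrix.sub_mul, hT2, Matrix.one_mul, neg_sub]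
  constructor
  · have h1 : P * (T * U) * P = P * sqrtUᴴ * T * sqrtU * P := by
      rw [← hmid]; noncomm_ring
    rw [← h1, ← Matrix.mul_assoc, hPT]
  · have h2 : Pperp * (T * U) * Pperp = Pperp * sqrtUᴴ * T * sqrtU * Pperp := by
      rw [← hmid]; noncomm_ring
    rw [← h2, ← Matrix.mul_assoc, hPpT]; noncomm_ring
end

section
/- With P = (T+I)/2, P⊥ = (I-T)/2 and U = exp(-itH), the sum PUP + P⊥UP⊥ equals the Hermitian part (U+U†)/2 of U. -/
open Matrix

/-- With `P = (T+I)/2`, `P⊥ = (I-T)/2`, `U = exp(-itH)`: `PUP + P⊥UP⊥ = (U+U†)/2`. -/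
theorem stmt_9 (n : ℕ) (H T : Matrix (Fin n) (Fin n) ℂ)
    (hT : Tᴴ = T) (hT2 : T * T = 1) (hH : Hᴴ = H)
    (hanti : T * H = -(H * T))
    (P Pperp : Matrix (Fin n) (Fin n) ℂ)
    (hP : P = (2⁻¹ : ℂ) • (T + 1)) (hPperp : Pperp = (2⁻¹ : ℂ) • (1 - T))
    (t : ℝ) (U : Matrix (Fin n) (Fin n) ℂ)
    (hU : U = NormedSpace.exp ((-(Complex.I * (t : ℂ))) • H)) :
    P * U * P + Pperp * U * Pperp = (2⁻¹ : ℂ) • (U + Uᴴ) := by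
  have hTinv : T⁻¹ = T := Matrix.inv_eq_right_inv hT2
  have hconj : T * U * T = Uᴴ := by
    rw [hU, ← Matrix.exp_conjTranspose]
    have h1 : ((-(Complex.I * (t : ℂ))) • H)ᴴ = (Complex.I * (t : ℂ)) • H := by
      rw [Matrix.conjTranspose_smul, hH]
      congr 1
      simp [Complex.ext_iff]
    have h2 : T * ((-(Complex.I * (t : ℂ))) • H) * T = (Complex.I * (t : ℂ)) • H := by
      rw [Matrix.mul_smul, Matrix.smul_mul, hanti]
      rw [show (-(H * T)) * T = -(H * (T * T)) by noncomm_ring, hT2]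
      simp
    have hu : IsUnit T := ⟨⟨T, T, hT2, hT2⟩, rfl⟩
    have := Matrix.exp_conj T ((-(Complex.I * (t : ℂ))) • H) hu
    rw [hTinv] at this
    rw [h1, ← h2, this]
  rw [hP, hPperp, ← hconj]
  simp only [Matrix.smul_mul, Matrix.mul_smul, add_mul, mul_add, sub_mul, mul_sub,
    mul_one, one_mul, smul_add, smul_sub, smul_smul, Matrix.mul_assoc]
  module
end

section
/- Under the same hypotheses, with h = (t_b-tₐ)/2 and U = exp(-i(t_b-tₐ)H): (i/ξ²)⟨v(h)|(iHT)|v(h)⟩ - i(1-1/ξ²)⟨v⊥(h)|(iHT)|v⊥(h)⟩ = i·Im⟨φ|UH|φ⟩. -/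
open Matrix

/-- Implicit Hadamard test (imaginary part): with `T` Hermitian involutory, `{T,H}=0`,
`P = (T+I)/2`, `P⊥ = I - P`, `|φ⟩` a unit vector with nonzero projections,
`1/ξ² = ⟨φ|P|φ⟩`, `|v(t)⟩ = ξ exp(-itH)P|φ⟩`, `|v⊥(t)⟩ = (ξ/√(ξ²-1)) exp(-itH)P⊥|φ⟩`:
for `h = (t_b-tₐ)/2` and `U = exp(-i(t_b-tₐ)H)`,
`(i/ξ²)⟨v(h)|(iHT)|v(h)⟩ - i(1-1/ξ²)⟨v⊥(h)|(iHT)|v⊥(h)⟩ = i·Im⟨φ|UH|φ⟩`. -/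
theorem stmt_12 (n : ℕ) (H T : Matrix (Fin n) (Fin n) ℂ)
    (hT : Tᴴ = T) (hT2 : T * T = 1) (hH : Hᴴ = H)
    (hanti : T * H = -(H * T))
    (P Pperp : Matrix (Fin n) (Fin n) ℂ)
    (hP : P = (2⁻¹ : ℂ) • (T + 1)) (hPperp : Pperp = 1 - P)
    (φ : Fin n → ℂ) (hφ : star φ ⬝ᵥ φ = 1)
    (hproj : P.mulVec φ ≠ 0) (hprojp : Pperp.mulVec φ ≠ 0)
    (ξ : ℝ) (hξ : ξ > 0) (hξdef : ((1 / ξ ^ 2 : ℝ) : ℂ) = star φ ⬝ᵥ P.mulVec φ)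
    (v vperp : ℝ → Fin n → ℂ)
    (hv : ∀ t : ℝ, v t =
      (ξ : ℂ) • (NormedSpace.exp ((-(Complex.I * (t : ℂ))) • H)).mulVec (P.mulVec φ))
    (hvperp : ∀ t : ℝ, vperp t =
      ((ξ / Real.sqrt (ξ ^ 2 - 1) : ℝ) : ℂ) •
        (NormedSpace.exp ((-(Complex.I * (t : ℂ))) • H)).mulVec (Pperp.mulVec φ))
    (ta tb : ℝ) (h : ℝ) (hh : h = (tb - ta) / 2)
    (U : Matrix (Fin n) (Fin n) ℂ)
    (hU : U = NormedSpace.exp ((-(Complex.I * ((tb - ta : ℝ) : ℂ))) • H)) :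
    Complex.I * ((1 / ξ ^ 2 : ℝ) : ℂ) *
          (star (v h) ⬝ᵥ (Complex.I • (H * T)).mulVec (v h)) -
        Complex.I * ((1 - 1 / ξ ^ 2 : ℝ) : ℂ) *
          (star (vperp h) ⬝ᵥ (Complex.I • (H * T)).mulVec (vperp h)) =
      Complex.I * ((star φ ⬝ᵥ (U * H).mulVec φ).im : ℂ) := by
  have hTinv : T⁻¹ = T := Matrix.inv_eq_right_inv hT2
  have hTunit : IsUnit T := ⟨⟨T, T, hT2, hT2⟩, rfl⟩
  set c : ℂ := -(Complex.I * (h : ℂ)) with hc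
  set E := NormedSpace.exp (c • H) with hE
  set F := NormedSpace.exp ((-c) • H) with hFdef
  have hTHT : T * H * T = -H := by
    rw [hanti, neg_mul, Matrix.mul_assoc, hT2, mul_one]
  have hF_eq : F = T * E * T := by
    have h1 : (-c) • H = T * (c • H) * T⁻¹ := by
      rw [hTinv, Matrix.mul_smul, Matrix.smul_mul, hTHT, smul_neg, neg_smul]
    rw [hFdef, h1, Matrix.exp_conj T (c • H) hTunit, hTinv]
  have hEH : E * H = H * E := by
    have hcomm : Commute (c • H) H := (Commute.refl H).smul_left c
    letI : SeminormedRing (Matrix (Fin n) (Fin n) ℂ) := Matrix.linftyOpSemiNormedRing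
    letI : NormedRing (Matrix (Fin n) (Fin n) ℂ) := Matrix.linftyOpNormedRing
    letI : NormedAlgebra ℂ (Matrix (Fin n) (Fin n) ℂ) := Matrix.linftyOpNormedAlgebra
    exact hcomm.exp_left.eq
  have hFH : F * H = H * F := by
    have hcomm : Commute ((-c) • H) H := (Commute.refl H).smul_left (-c)
    letI : SeminormedRing (Matrix (Fin n) (Fin n) ℂ) := Matrix.linftyOpSemiNormedRing
    letI : NormedRing (Matrix (Fin n) (Fin n) ℂ) := Matrix.linftyOpNormedRing
    letI : NormedAlgebra ℂ (Matrix (Fin n) (Fin n) ℂ) := Matrix.linftyOpNormedAlgebra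
    exact hcomm.exp_left.eq
  have hUeq : U = E * E := by
    have h1 : (-(Complex.I * ((tb - ta : ℝ) : ℂ))) • H = c • H + c • H := by
      rw [← add_smul]
      congr 1
      rw [hc, hh]
      push_cast
      ring
    rw [hU, h1, Matrix.exp_add_of_commute _ _ (Commute.refl _)]
  have hEF : Eᴴ = F := by
    rw [hE, hFdef, ← Matrix.exp_conjTranspose]
    congr 1
    rw [conjTranspose_smul, hH]
    congr 1
    rw [hc]
    simp [Complex.conj_ofReal]
  have hUadj : Uᴴ = F * F := by rw [hUeq, conjTranspose_mul, hEF]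
  -- movement lemmas (right-associated normal form: H to the left, T to the right)
  have mTH : ∀ X : Matrix (Fin n) (Fin n) ℂ, T * (H * X) = -(H * (T * X)) := fun X => by
    rw [← Matrix.mul_assoc, hanti, neg_mul, Matrix.mul_assoc]
  have mTE : ∀ X : Matrix (Fin n) (Fin n) ℂ, T * (E * X) = F * (T * X) := fun X => by
    rw [← Matrix.mul_assoc, show T * E = F * T by
      rw [hF_eq, Matrix.mul_assoc (T * E) T T, hT2, mul_one], Matrix.mul_assoc]
  have mTF : ∀ X : Matrix (Fin n) (Fin n) ℂ, T * (F * X) = E * (T * X) := fun X => by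
    rw [← Matrix.mul_assoc, show T * F = E * T by
      rw [hF_eq, ← Matrix.mul_assoc, ← Matrix.mul_assoc, hT2, one_mul], Matrix.mul_assoc]
  have mEH : ∀ X : Matrix (Fin n) (Fin n) ℂ, E * (H * X) = H * (E * X) := fun X => by
    rw [← Matrix.mul_assoc, hEH, Matrix.mul_assoc]
  have mFH : ∀ X : Matrix (Fin n) (Fin n) ℂ, F * (H * X) = H * (F * X) := fun X => by
    rw [← Matrix.mul_assoc, hFH, Matrix.mul_assoc]
  have mTT : ∀ X : Matrix (Fin n) (Fin n) ℂ, T * (T * X) = X := fun X => by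
    rw [← Matrix.mul_assoc, hT2, one_mul]
  have hTE' : T * E = F * T := by
    rw [hF_eq, Matrix.mul_assoc (T * E) T T, hT2, mul_one]
  have hTF' : T * F = E * T := by
    rw [hF_eq, ← Matrix.mul_assoc, ← Matrix.mul_assoc, hT2, one_mul]
  -- projections
  have hPherm : Pᴴ = P := by
    rw [hP, conjTranspose_smul, conjTranspose_add, hT, conjTranspose_one]
    norm_num
  have hPperp' : Pperp = (2⁻¹ : ℂ) • (1 - T) := by
    rw [hPperp, hP]
    module
  have hPpherm : Pperpᴴ = Pperp := by
    rw [hPperp, conjTranspose_sub, conjTranspose_one, hPherm]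
  have mTP : T * P = P := by
    rw [hP, Matrix.mul_smul, mul_add, hT2, mul_one]
    rw [add_comm]
  have mTPp : T * Pperp = -Pperp := by
    rw [hPperp', Matrix.mul_smul, mul_sub, hT2, mul_one, ← smul_neg]
    congr 1
    abel
  -- conjugation identities
  have hM1 : (E * P)ᴴ * (Complex.I • (H * T)) * (E * P)
      = Complex.I • (P * (H * (F * (F * P)))) := by
    rw [conjTranspose_mul, hPherm, hEF]
    rw [Matrix.mul_smul, Matrix.smul_mul]
    congr 1
    calc P * F * (H * T) * (E * P)
        = P * (F * (H * (T * (E * P)))) := by simp only [Matrix.mul_assoc]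
      _ = P * (F * (H * (F * (T * P)))) := by rw [mTE]
      _ = P * (F * (H * (F * P))) := by rw [mTP]
      _ = P * (H * (F * (F * P))) := by rw [mFH]
  have hM2 : (E * Pperp)ᴴ * (Complex.I • (H * T)) * (E * Pperp)
      = -(Complex.I • (Pperp * (H * (F * (F * Pperp))))) := by
    rw [conjTranspose_mul, hPpherm, hEF]
    rw [Matrix.mul_smul, Matrix.smul_mul, ← smul_neg]
    congr 1
    calc Pperp * F * (H * T) * (E * Pperp)
        = Pperp * (F * (H * (T * (E * Pperp)))) := by simp only [Matrix.mul_assoc]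
      _ = Pperp * (F * (H * (F * (T * Pperp)))) := by rw [mTE]
      _ = Pperp * (F * (H * (F * -Pperp))) := by rw [mTPp]
      _ = -(Pperp * (H * (F * (F * Pperp)))) := by
          rw [Matrix.mul_neg, Matrix.mul_neg, Matrix.mul_neg, Matrix.mul_neg, mFH]
  -- the sum identity
  have hsum : P * (H * (F * (F * P))) + Pperp * (H * (F * (F * Pperp)))
      = (2⁻¹ : ℂ) • (H * (F * F) - H * (E * E)) := by
    rw [hP, hPperp']
    simp only [Matrix.smul_mul, Matrix.mul_smul, add_mul, mul_add, sub_mul, mul_sub,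
      one_mul, Matrix.mul_one, mTH, mTE, mTF, mTT, mEH, mFH, hTE', hTF', hT2,
      Matrix.mul_neg, Matrix.neg_mul, neg_neg, smul_neg, smul_add, smul_sub, smul_smul]
    module
  -- dot-product helpers
  have keyQ : ∀ (a : ℂ) (M A : Matrix (Fin n) (Fin n) ℂ),
      star (a • M.mulVec φ) ⬝ᵥ A.mulVec (a • M.mulVec φ)
        = (star a * a) * (star φ ⬝ᵥ (Mᴴ * A * M).mulVec φ) := by
    intro a M A
    rw [Matrix.mul_assoc]
    simp [Matrix.star_mulVec, Matrix.dotProduct_mulVec, Matrix.vecMul_vecMul,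
      Matrix.mulVec_smul, Matrix.smul_vecMul, smul_dotProduct, dotProduct_smul,
      smul_smul, Matrix.mul_assoc, star_smul]
    ring
  have hconj : ∀ N : Matrix (Fin n) (Fin n) ℂ,
      (starRingEnd ℂ) (star φ ⬝ᵥ N.mulVec φ) = star φ ⬝ᵥ Nᴴ.mulVec φ := fun N => by
    rw [show (starRingEnd ℂ) (star φ ⬝ᵥ N.mulVec φ) = star (star φ ⬝ᵥ N.mulVec φ) from rfl,
      ← Matrix.star_dotProduct, Matrix.star_mulVec, ← Matrix.dotProduct_mulVec]
  -- positivity: ξ² > 1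
  have hPpPp : Pperp * Pperp = Pperp := by
    rw [hPperp']
    rw [Matrix.smul_mul, Matrix.mul_smul, smul_smul]
    rw [sub_mul, mul_sub, mul_sub, one_mul, mul_one, hT2]
    norm_num
    module
  have hwpos : ∀ w : Fin n → ℂ, w ≠ 0 → ∃ r : ℝ, 0 < r ∧ star w ⬝ᵥ w = (r : ℂ) := by
    intro w hw
    refine ⟨∑ i, Complex.normSq (w i), ?_, ?_⟩
    · obtain ⟨i, hi⟩ := Function.ne_iff.mp hw
      exact Finset.sum_pos' (fun j _ => Complex.normSq_nonneg _)
        ⟨i, Finset.mem_univ i, by simpa [Complex.normSq_pos] using hi⟩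
    · push_cast
      simp [dotProduct, Complex.normSq_eq_conj_mul_self, Complex.star_def]
  have hxi2pos : (0:ℝ) < ξ ^ 2 := by positivity
  have hxi2ne : (ξ:ℝ) ^ 2 ≠ 0 := ne_of_gt hxi2pos
  have hval : ((1 - 1 / ξ ^ 2 : ℝ) : ℂ) = star φ ⬝ᵥ Pperp.mulVec φ := by
    rw [hPperp, Matrix.sub_mulVec, Matrix.one_mulVec, dotProduct_sub, hφ, ← hξdef]
    push_cast
    ring
  have hgt : (1:ℝ) - 1 / ξ ^ 2 > 0 := by
    obtain ⟨r, hr, hreq⟩ := hwpos (Pperp.mulVec φ) hprojp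
    have h2 : star φ ⬝ᵥ Pperp.mulVec φ = (r : ℂ) := by
      rw [show star φ ⬝ᵥ Pperp.mulVec φ = star φ ⬝ᵥ (Pperpᴴ * Pperp).mulVec φ by
        rw [hPpherm, hPpPp], ← Matrix.mulVec_mulVec, Matrix.dotProduct_mulVec,
        ← Matrix.star_mulVec]
      exact hreq
    have := hval.trans h2
    have h3 : (1 - 1 / ξ ^ 2 : ℝ) = r := by exact_mod_cast this
    linarith
  have hxi21 : (ξ:ℝ) ^ 2 - 1 > 0 := by
    have h4 : 1 / ξ ^ 2 < 1 := by linarith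
    rw [div_lt_one hxi2pos] at h4
    linarith
  have hsq : ((ξ / Real.sqrt (ξ ^ 2 - 1) : ℝ)) ^ 2 = ξ ^ 2 / (ξ ^ 2 - 1) := by
    rw [div_pow, Real.sq_sqrt (le_of_lt hxi21)]
  -- compute the two terms
  have hterm1 : star (v h) ⬝ᵥ (Complex.I • (H * T)).mulVec (v h)
      = ((ξ:ℝ)^2 : ℂ) * (Complex.I * (star φ ⬝ᵥ (P * (H * (F * (F * P)))).mulVec φ)) := by
    rw [hv h, ← hc, ← hE, Matrix.mulVec_mulVec, keyQ, hM1]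
    rw [Matrix.smul_mulVec, dotProduct_smul]
    rw [show star ((ξ:ℝ):ℂ) = ((ξ:ℝ):ℂ) from by rw [Complex.star_def, Complex.conj_ofReal]]
    rw [smul_eq_mul]
    push_cast
    ring
  have hterm2 : star (vperp h) ⬝ᵥ (Complex.I • (H * T)).mulVec (vperp h)
      = -(((ξ ^ 2 / (ξ ^ 2 - 1) : ℝ) : ℂ) *
          (Complex.I * (star φ ⬝ᵥ (Pperp * (H * (F * (F * Pperp)))).mulVec φ))) := by
    rw [hvperp h, ← hc, ← hE, Matrix.mulVec_mulVec, keyQ, hM2]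
    rw [Matrix.neg_mulVec, dotProduct_neg, Matrix.smul_mulVec, dotProduct_smul]
    rw [show star ((ξ / Real.sqrt (ξ ^ 2 - 1) : ℝ) : ℂ) = ((ξ / Real.sqrt (ξ ^ 2 - 1) : ℝ) : ℂ)
      from Complex.conj_ofReal _]
    rw [show ((ξ / Real.sqrt (ξ ^ 2 - 1) : ℝ) : ℂ) * ((ξ / Real.sqrt (ξ ^ 2 - 1) : ℝ) : ℂ)
        = ((ξ ^ 2 / (ξ ^ 2 - 1) : ℝ) : ℂ) by
      rw [← Complex.ofReal_mul, ← sq, hsq]]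
    rw [smul_eq_mul]
    ring
  -- put it together
  set z := star φ ⬝ᵥ (H * U).mulVec φ with hz
  have hUadjH : Uᴴ * H = H * Uᴴ := by
    rw [hUadj]
    calc F * F * H = F * (F * H) := by rw [Matrix.mul_assoc]
      _ = H * (F * F) := by rw [hFH, ← Matrix.mul_assoc, hFH, Matrix.mul_assoc]
  have hzconj : (starRingEnd ℂ) z = star φ ⬝ᵥ (H * Uᴴ).mulVec φ := by
    rw [hz, hconj, conjTranspose_mul, hH, hUadjH]
  have hUHc : U * H = H * U := by
    rw [hUeq, Matrix.mul_assoc, hEH, ← Matrix.mul_assoc, hEH, Matrix.mul_assoc]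
  have hξc : ((ξ:ℝ):ℂ) ≠ 0 := Complex.ofReal_ne_zero.mpr (ne_of_gt hξ)
  have h5 : (ξ:ℝ) ^ 2 - 1 ≠ 0 := ne_of_gt hxi21
  have ha : ((1 / ξ ^ 2 : ℝ) : ℂ) * ((ξ:ℝ):ℂ) ^ 2 = 1 := by
    push_cast
    field_simp
  have hb : ((1 - 1 / ξ ^ 2 : ℝ) : ℂ) * ((ξ ^ 2 / (ξ ^ 2 - 1) : ℝ) : ℂ) = 1 := by
    have hr : (1 - 1 / ξ ^ 2) * (ξ ^ 2 / (ξ ^ 2 - 1)) = 1 := by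
      field_simp
    rw [← Complex.ofReal_mul, hr, Complex.ofReal_one]
  rw [hterm1, hterm2]
  rw [show star φ ⬝ᵥ (U * H).mulVec φ = z from by rw [hz, hUHc]]
  set D1 := star φ ⬝ᵥ (P * (H * (F * (F * P)))).mulVec φ with hD1
  set D2 := star φ ⬝ᵥ (Pperp * (H * (F * (F * Pperp)))).mulVec φ with hD2
  have hD12 : D1 + D2 = 2⁻¹ * ((starRingEnd ℂ) z - z) := by
    rw [hD1, hD2, ← dotProduct_add, ← Matrix.add_mulVec, hsum, Matrix.smul_mulVec,
      dotProduct_smul, smul_eq_mul, Matrix.sub_mulVec, dotProduct_sub, ← hUadj, ← hUeq,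
      ← hzconj, ← hz]
  have e : Complex.I * ((1 / ξ ^ 2 : ℝ) : ℂ) * (((ξ:ℝ):ℂ) ^ 2 * (Complex.I * D1)) -
        Complex.I * ((1 - 1 / ξ ^ 2 : ℝ) : ℂ) *
          (-(((ξ ^ 2 / (ξ ^ 2 - 1) : ℝ) : ℂ) * (Complex.I * D2)))
      = (Complex.I * Complex.I) *
          ((((1 / ξ ^ 2 : ℝ) : ℂ) * ((ξ:ℝ):ℂ) ^ 2) * D1 +
           (((1 - 1 / ξ ^ 2 : ℝ) : ℂ) * ((ξ ^ 2 / (ξ ^ 2 - 1) : ℝ) : ℂ)) * D2) := by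
    ring
  rw [e, ha, hb, Complex.I_mul_I, one_mul, one_mul, hD12]
  have hsc := Complex.sub_conj z
  push_cast at hsc
  linear_combination (2⁻¹ : ℂ) * hsc
end

section
/- Localized implicit Hadamard test: with T = ⊗T_j Hermitian involutory, {T,H}=0, P_α the localized projectors with parity p(α) = (-1)^{Σα(j)}, U = exp(-i(t_b-tₐ)H), √U = exp(-i((t_b-tₐ)/2)H), and any state |φ⟩: Σ_α p(α)⟨φ|P_α (√U)† T (√U) P_α|φ⟩ = Re ⟨φ| Σ_α P_α U P_α |φ⟩. -/
open Matrix

/-- The tensor (Kronecker) product of a family of square matrices, realized as a matrix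
indexed by the product of the index types. -/
def tensorProd {s : ℕ} {n : Fin s → ℕ}
    (M : ∀ j, Matrix (Fin (n j)) (Fin (n j)) ℂ) :
    Matrix (∀ j, Fin (n j)) (∀ j, Fin (n j)) ℂ :=
  fun x y => ∏ j, M j (x j) (y j)

/-- The localized projector `P_α = ⊗_j (I + (-1)^{α(j)} T_j)/2`. -/
noncomputable def locProj {s : ℕ} {n : Fin s → ℕ}
    (T : ∀ j, Matrix (Fin (n j)) (Fin (n j)) ℂ) (α : Fin s → Fin 2) :
    Matrix (∀ j, Fin (n j)) (∀ j, Fin (n j)) ℂ :=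
  tensorProd fun j => (2⁻¹ : ℂ) • (1 + ((-1 : ℂ) ^ (α j : ℕ)) • T j)

section aux
variable {s : ℕ} {n : Fin s → ℕ}

lemma tensor_mul (M N : ∀ j, Matrix (Fin (n j)) (Fin (n j)) ℂ) :
    tensorProd M * tensorProd N = tensorProd (fun j => M j * N j) := by
  ext x y
  simp only [tensorProd, Matrix.mul_apply, ← Finset.prod_mul_distrib]
  rw [Finset.prod_univ_sum, Fintype.piFinset_univ]

lemma tensor_smul (c : Fin s → ℂ) (M : ∀ j, Matrix (Fin (n j)) (Fin (n j)) ℂ) :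
    tensorProd (fun j => c j • M j) = (∏ j, c j) • tensorProd M := by
  ext x y
  simp [tensorProd, Matrix.smul_apply, smul_eq_mul, Finset.prod_mul_distrib]

lemma tensor_one : tensorProd (fun j => (1 : Matrix (Fin (n j)) (Fin (n j)) ℂ)) = 1 := by
  ext x y
  simp only [tensorProd, Matrix.one_apply, Finset.prod_boole, Finset.mem_univ, forall_true_left]
  by_cases h : x = y
  · simp [h]
  · simp [h, show ¬ ∀ i, x i = y i from fun hh => h (funext hh)]

lemma tensor_conjT (M : ∀ j, Matrix (Fin (n j)) (Fin (n j)) ℂ) :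
    (tensorProd M)ᴴ = tensorProd (fun j => (M j)ᴴ) := by
  ext x y
  simp [tensorProd, Matrix.conjTranspose_apply, star_prod]

end aux

/-- Localized implicit Hadamard test: with `T = ⊗T_j` Hermitian involutory, `{T,H}=0`,
`P_α` the localized projectors with parity `p(α) = (-1)^{Σα(j)}`, `U = exp(-i(t_b-tₐ)H)`,
`√U = exp(-i((t_b-tₐ)/2)H)`, and any state `|φ⟩`:
`Σ_α p(α)⟨φ|P_α (√U)† T (√U) P_α|φ⟩ = Re ⟨φ| Σ_α P_α U P_α |φ⟩`. -/
theorem stmt_17 (s : ℕ) (n : Fin s → ℕ)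
    (T : ∀ j, Matrix (Fin (n j)) (Fin (n j)) ℂ)
    (hT : ∀ j, (T j)ᴴ = T j) (hT2 : ∀ j, T j * T j = 1)
    (H : Matrix (∀ j, Fin (n j)) (∀ j, Fin (n j)) ℂ) (hH : Hᴴ = H)
    (hanti : tensorProd T * H = -(H * tensorProd T))
    (φ : (∀ j, Fin (n j)) → ℂ) (ta tb : ℝ)
    (U sqrtU : Matrix (∀ j, Fin (n j)) (∀ j, Fin (n j)) ℂ)
    (hU : U = NormedSpace.exp ((-(Complex.I * ((tb - ta : ℝ) : ℂ))) • H))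
    (hsqrtU : sqrtU = NormedSpace.exp ((-(Complex.I * (((tb - ta) / 2 : ℝ) : ℂ))) • H)) :
    (∑ α : Fin s → Fin 2, ((-1 : ℂ) ^ (∑ j, (α j : ℕ))) *
        (star φ ⬝ᵥ (locProj T α * sqrtUᴴ * tensorProd T * sqrtU * locProj T α).mulVec φ)) =
      (((star φ ⬝ᵥ (∑ α : Fin s → Fin 2,
          locProj T α * U * locProj T α).mulVec φ)).re : ℂ) := by
  set A := tensorProd T with hA
  -- A is an involution
  have hA2 : A * A = 1 := by
    rw [hA, tensor_mul]
    simp only [hT2]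
    exact tensor_one
  -- A is Hermitian
  have hAH : Aᴴ = A := by
    rw [hA, tensor_conjT]
    simp only [hT]
  -- conjugation of H by A
  have hAHA : A * H * A = -H := by
    rw [hanti, neg_mul, mul_assoc, hA2, mul_one]
  -- exp conjugation
  have hAunit : IsUnit A := ⟨⟨A, A, hA2, hA2⟩, rfl⟩
  have hAinv : A⁻¹ = A := Matrix.inv_eq_right_inv hA2
  have hconj : ∀ d : ℂ, A * NormedSpace.exp (d • H) * A = NormedSpace.exp ((-d) • H) := by
    intro d
    have h := Matrix.exp_conj A (d • H) hAunit
    rw [hAinv] at h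
    rw [← h]
    congr 1
    rw [mul_smul_comm, smul_mul_assoc, hAHA, smul_neg, neg_smul]
  set c : ℂ := -(Complex.I * ((tb - ta : ℝ) : ℂ)) with hc
  set c2 : ℂ := -(Complex.I * (((tb - ta) / 2 : ℝ) : ℂ)) with hc2
  have hcc : c2 + c2 = c := by
    rw [hc, hc2]
    push_cast
    ring
  have hstarc2 : star c2 = -c2 := by
    rw [hc2]
    simp [Complex.ext_iff]
  -- sqrtU * sqrtU = U
  have hU2 : sqrtU * sqrtU = U := by
    rw [hsqrtU, hU, ← hcc, add_smul]
    exact (Matrix.exp_add_of_commute _ _ (Commute.refl _)).symm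
  -- sqrtUᴴ
  have hsUH : sqrtUᴴ = NormedSpace.exp ((-c2) • H) := by
    rw [hsqrtU, ← Matrix.exp_conjTranspose]
    congr 1
    rw [Matrix.conjTranspose_smul, hH, hstarc2]
  -- A * sqrtU = sqrtUᴴ * A
  have hAs : A * sqrtU = sqrtUᴴ * A := by
    have h := hconj c2
    rw [← hsqrtU, ← hsUH] at h
    calc A * sqrtU = A * sqrtU * (A * A) := by rw [hA2, mul_one]
      _ = (A * sqrtU * A) * A := by rw [mul_assoc (A * sqrtU)]
      _ = sqrtUᴴ * A := by rw [h]
  -- Uᴴ = A * U * A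
  have hUconj : Uᴴ = A * U * A := by
    have h := hconj c
    rw [← hU] at h
    rw [h, hU, ← Matrix.exp_conjTranspose]
    congr 1
    rw [Matrix.conjTranspose_smul, hH]
    congr 1
    rw [hc]
    simp [Complex.ext_iff]
  -- A * U = Uᴴ * A
  have hAU : A * U = Uᴴ * A := by
    rw [hUconj, mul_assoc, mul_assoc, hA2, mul_one]
  -- sqrtUᴴ * A * sqrtU = A * U
  have hmid : sqrtUᴴ * A * sqrtU = A * U := by
    calc sqrtUᴴ * A * sqrtU = sqrtUᴴ * (A * sqrtU) := by rw [mul_assoc]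
      _ = sqrtUᴴ * (sqrtUᴴ * A) := by rw [hAs]
      _ = (sqrtUᴴ * sqrtUᴴ) * A := by rw [mul_assoc]
      _ = (sqrtU * sqrtU)ᴴ * A := by rw [Matrix.conjTranspose_mul]
      _ = Uᴴ * A := by rw [hU2]
      _ = A * U := hAU.symm
  -- scalar facts
  have hε2 : ∀ k : ℕ, ((-1 : ℂ) ^ k) * ((-1 : ℂ) ^ k) = 1 := by
    intro k
    rw [← pow_add]
    exact Even.neg_one_pow ⟨k, rfl⟩
  -- A * P = p • P and P * A = p • P
  have hAP : ∀ α : Fin s → Fin 2,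
      A * locProj T α = ((-1 : ℂ) ^ (∑ j, (α j : ℕ))) • locProj T α := by
    intro α
    rw [hA]
    simp only [locProj]
    rw [tensor_mul]
    have hfac : ∀ j, T j * ((2⁻¹ : ℂ) • (1 + ((-1 : ℂ) ^ (α j : ℕ)) • T j)) =
        ((-1 : ℂ) ^ (α j : ℕ)) • ((2⁻¹ : ℂ) • (1 + ((-1 : ℂ) ^ (α j : ℕ)) • T j)) := by
      intro j
      set ε : ℂ := ((-1 : ℂ) ^ (α j : ℕ)) with hε
      have h1 : T j * ((2⁻¹ : ℂ) • (1 + ε • T j)) = (2⁻¹ : ℂ) • (T j + ε • 1) := by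
        rw [mul_smul_comm, mul_add, mul_one, mul_smul_comm, hT2 j]
      have h2 : ε • ((2⁻¹ : ℂ) • (1 + ε • T j)) = (2⁻¹ : ℂ) • (ε • 1 + T j) := by
        rw [smul_comm, smul_add, smul_smul, hε2 (α j : ℕ), one_smul]
      rw [h1, h2, add_comm]
    simp only [hfac]
    rw [tensor_smul, Finset.prod_pow_eq_pow_sum]
  have hPA : ∀ α : Fin s → Fin 2,
      locProj T α * A = ((-1 : ℂ) ^ (∑ j, (α j : ℕ))) • locProj T α := by
    intro α
    rw [hA]
    simp only [locProj]
    rw [tensor_mul]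
    have hfac : ∀ j, ((2⁻¹ : ℂ) • (1 + ((-1 : ℂ) ^ (α j : ℕ)) • T j)) * T j =
        ((-1 : ℂ) ^ (α j : ℕ)) • ((2⁻¹ : ℂ) • (1 + ((-1 : ℂ) ^ (α j : ℕ)) • T j)) := by
      intro j
      set ε : ℂ := ((-1 : ℂ) ^ (α j : ℕ)) with hε
      have h1 : ((2⁻¹ : ℂ) • (1 + ε • T j)) * T j = (2⁻¹ : ℂ) • (T j + ε • 1) := by
        rw [smul_mul_assoc, add_mul, one_mul, smul_mul_assoc, hT2 j]
      have h2 : ε • ((2⁻¹ : ℂ) • (1 + ε • T j)) = (2⁻¹ : ℂ) • (ε • 1 + T j) := by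
        rw [smul_comm, smul_add, smul_smul, hε2 (α j : ℕ), one_smul]
      rw [h1, h2, add_comm]
    simp only [hfac]
    rw [tensor_smul, Finset.prod_pow_eq_pow_sum]
  -- P is Hermitian
  have hPH : ∀ α : Fin s → Fin 2, (locProj T α)ᴴ = locProj T α := by
    intro α
    have hfac : ∀ j, ((2⁻¹ : ℂ) • (1 + ((-1 : ℂ) ^ (α j : ℕ)) • T j))ᴴ =
        (2⁻¹ : ℂ) • (1 + ((-1 : ℂ) ^ (α j : ℕ)) • T j) := by
      intro j
      have h1 : star ((-1 : ℂ) ^ (α j : ℕ)) = (-1 : ℂ) ^ (α j : ℕ) := by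
        rw [star_pow]; simp
      have h2 : star (2⁻¹ : ℂ) = (2⁻¹ : ℂ) := by simp
      rw [Matrix.conjTranspose_smul, Matrix.conjTranspose_add, Matrix.conjTranspose_one,
        Matrix.conjTranspose_smul, hT j, h1, h2]
    simp only [locProj]
    rw [tensor_conjT]
    simp only [hfac]
  -- key matrix identity for the LHS
  have key1 : ∀ α : Fin s → Fin 2,
      locProj T α * sqrtUᴴ * A * sqrtU * locProj T α =
        ((-1 : ℂ) ^ (∑ j, (α j : ℕ))) • (locProj T α * U * locProj T α) := by
    intro α
    calc locProj T α * sqrtUᴴ * A * sqrtU * locProj T α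
        = locProj T α * (sqrtUᴴ * A * sqrtU) * locProj T α := by
          simp only [mul_assoc]
      _ = locProj T α * (A * U) * locProj T α := by rw [hmid]
      _ = (locProj T α * A) * U * locProj T α := by simp only [mul_assoc]
      _ = ((-1 : ℂ) ^ (∑ j, (α j : ℕ))) • (locProj T α * U * locProj T α) := by
          rw [hPA α, smul_mul_assoc, smul_mul_assoc]
  -- each P U P is Hermitian
  have key2 : ∀ α : Fin s → Fin 2,
      (locProj T α * U * locProj T α)ᴴ = locProj T α * U * locProj T α := by
    intro α
    rw [Matrix.conjTranspose_mul, Matrix.conjTranspose_mul, hPH α]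
    calc locProj T α * (Uᴴ * locProj T α)
        = locProj T α * (A * U * A * locProj T α) := by rw [hUconj]
      _ = (locProj T α * A) * U * (A * locProj T α) := by simp only [mul_assoc]
      _ = (((-1 : ℂ) ^ (∑ j, (α j : ℕ))) • locProj T α) * U *
            (((-1 : ℂ) ^ (∑ j, (α j : ℕ))) • locProj T α) := by rw [hPA α, hAP α]
      _ = (((-1 : ℂ) ^ (∑ j, (α j : ℕ))) * ((-1 : ℂ) ^ (∑ j, (α j : ℕ)))) •
            (locProj T α * U * locProj T α) := by
          simp only [smul_mul_assoc, mul_smul_comm, smul_smul]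
      _ = locProj T α * U * locProj T α := by rw [hε2, one_smul]
  -- the LHS sum equals z
  have hLHS : (∑ α : Fin s → Fin 2, ((-1 : ℂ) ^ (∑ j, (α j : ℕ))) *
        (star φ ⬝ᵥ (locProj T α * sqrtUᴴ * A * sqrtU * locProj T α).mulVec φ)) =
      star φ ⬝ᵥ (∑ α : Fin s → Fin 2, locProj T α * U * locProj T α).mulVec φ := by
    have h1 : (∑ α : Fin s → Fin 2, locProj T α * U * locProj T α).mulVec φ =
        ∑ α : Fin s → Fin 2, (locProj T α * U * locProj T α).mulVec φ := by
      ext i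
      simp only [Matrix.mulVec, dotProduct, Finset.sum_apply, Matrix.sum_apply,
        Finset.sum_mul]
      exact Finset.sum_comm
    have h2 : star φ ⬝ᵥ (∑ α : Fin s → Fin 2, (locProj T α * U * locProj T α).mulVec φ) =
        ∑ α : Fin s → Fin 2, star φ ⬝ᵥ (locProj T α * U * locProj T α).mulVec φ := by
      simp only [dotProduct, Finset.sum_apply, Finset.mul_sum]
      exact Finset.sum_comm
    rw [h1, h2]
    refine Finset.sum_congr rfl fun α _ => ?_
    rw [key1 α, Matrix.smul_mulVec, dotProduct_smul, smul_eq_mul, ← mul_assoc,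
      hε2, one_mul]
  rw [hLHS]
  -- now show z is real
  set M : Matrix (∀ j, Fin (n j)) (∀ j, Fin (n j)) ℂ :=
    ∑ α : Fin s → Fin 2, locProj T α * U * locProj T α with hM
  have hMH : Mᴴ = M := by
    rw [hM, Matrix.conjTranspose_sum]
    exact Finset.sum_congr rfl fun α _ => key2 α
  set z : ℂ := star φ ⬝ᵥ M.mulVec φ with hz
  have hzstar : (starRingEnd ℂ) z = z := by
    rw [hz]
    calc (starRingEnd ℂ) (star φ ⬝ᵥ M.mulVec φ)
        = star (star φ ⬝ᵥ M.mulVec φ) := rfl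
      _ = star (M.mulVec φ) ⬝ᵥ φ := (star_dotProduct (M.mulVec φ) φ).symm
      _ = (star φ ᵥ* Mᴴ) ⬝ᵥ φ := by rw [Matrix.star_mulVec]
      _ = star φ ⬝ᵥ Mᴴ.mulVec φ := by rw [← Matrix.dotProduct_mulVec]
      _ = star φ ⬝ᵥ M.mulVec φ := by rw [hMH]
  exact (Complex.conj_eq_iff_re.mp hzstar).symm
end

section
/- Kubo formula: for square matrices A, B of the same size and real t, [A, exp(-itB)] = -i·exp(-itB)·∫₀ᵗ exp(iτB) [A,B] exp(-iτB) dτ. -/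
open Matrix
open NormedSpace

/-- Kubo formula: for `n×n` complex matrices `A`, `B` and real `t`,
`[A, exp(-itB)] = -i·exp(-itB)·∫₀ᵗ exp(iτB) [A,B] exp(-iτB) dτ`, the integral being taken
entrywise. -/
theorem stmt_18 (n : ℕ) (A B : Matrix (Fin n) (Fin n) ℂ) (t : ℝ) :
    A * NormedSpace.exp ((-(Complex.I * (t : ℂ))) • B) -
        NormedSpace.exp ((-(Complex.I * (t : ℂ))) • B) * A =
      (-Complex.I) •
        (NormedSpace.exp ((-(Complex.I * (t : ℂ))) • B) *
          Matrix.of (fun i j => ∫ τ in (0 : ℝ)..t,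
            (NormedSpace.exp ((Complex.I * (τ : ℂ)) • B) *
              (A * B - B * A) *
              NormedSpace.exp ((-(Complex.I * (τ : ℂ))) • B)) i j)) := by
  letI : SeminormedRing (Matrix (Fin n) (Fin n) ℂ) := Matrix.linftyOpSemiNormedRing
  letI : NormedRing (Matrix (Fin n) (Fin n) ℂ) := Matrix.linftyOpNormedRing
  letI : NormedAlgebra ℂ (Matrix (Fin n) (Fin n) ℂ) := Matrix.linftyOpNormedAlgebra
  letI : NormedAlgebra ℝ (Matrix (Fin n) (Fin n) ℂ) := Matrix.linftyOpNormedAlgebra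
  letI : CompleteSpace (Matrix (Fin n) (Fin n) ℂ) :=
    inferInstanceAs (CompleteSpace (Fin n → Fin n → ℂ))
  set E : ℝ → Matrix (Fin n) (Fin n) ℂ :=
    fun τ => exp ((Complex.I * (τ : ℂ)) • B) with hE
  set F : ℝ → Matrix (Fin n) (Fin n) ℂ :=
    fun τ => exp ((-(Complex.I * (τ : ℂ))) • B) with hF
  -- derivative of coefficient functions
  have hc : ∀ τ : ℝ, HasDerivAt (fun τ : ℝ => Complex.I * (τ : ℂ)) Complex.I τ := by
    intro τ
    simpa using (Complex.ofRealCLM.hasDerivAt (x := τ)).const_mul Complex.I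
  have hc' : ∀ τ : ℝ, HasDerivAt (fun τ : ℝ => -(Complex.I * (τ : ℂ))) (-Complex.I) τ :=
    fun τ => (hc τ).neg
  have hEd : ∀ τ : ℝ, HasDerivAt E (Complex.I • (B * E τ)) τ := by
    intro τ
    have h1 : HasDerivAt (fun c : ℂ => exp (c • B))
        (B * exp ((Complex.I * (τ : ℂ)) • B)) (Complex.I * (τ : ℂ)) :=
      hasDerivAt_exp_smul_const' B _
    have h2 := h1.scomp τ (hc τ)
    simp only [Function.comp_def] at h2
    exact h2
  have hFd : ∀ τ : ℝ, HasDerivAt F ((-Complex.I) • (B * F τ)) τ := by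
    intro τ
    have h1 : HasDerivAt (fun c : ℂ => exp (c • B))
        (B * exp ((-(Complex.I * (τ : ℂ))) • B)) (-(Complex.I * (τ : ℂ))) :=
      hasDerivAt_exp_smul_const' B _
    have h2 := h1.scomp τ (hc' τ)
    simp only [Function.comp_def, neg_smul] at h2 ⊢
    rw [hF]
    simp only [neg_smul]
    exact h2
  -- B commutes with E τ
  have hBE : ∀ τ : ℝ, B * E τ = E τ * B := by
    intro τ
    exact (((Commute.refl B).smul_right ((Complex.I * (τ : ℂ)))).exp_right).eq
  -- derivative of the conjugated function
  have hkey : ∀ τ : ℝ, HasDerivAt (fun τ => E τ * A * F τ)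
      ((-Complex.I) • (E τ * (A * B - B * A) * F τ)) τ := by
    intro τ
    have h := (((hEd τ).mul_const A).mul (hFd τ))
    have heq : (Complex.I • (B * E τ)) * A * F τ
        + (E τ * A) * ((-Complex.I) • (B * F τ))
        = (-Complex.I) • (E τ * (A * B - B * A) * F τ) := by
      rw [hBE τ]
      simp only [smul_mul_assoc, mul_smul_comm, mul_sub, sub_mul, mul_assoc]
      module
    rw [← heq]
    exact h
  -- continuity of the integrand
  have hcont : Continuous fun τ : ℝ => E τ * (A * B - B * A) * F τ := by
    have hEc : Continuous E :=
      continuous_iff_continuousAt.2 fun τ => (hEd τ).continuousAt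
    have hFc : Continuous F :=
      continuous_iff_continuousAt.2 fun τ => (hFd τ).continuousAt
    exact (hEc.mul continuous_const).mul hFc
  -- entrywise FTC
  have hint : ∀ i j, (∫ τ in (0:ℝ)..t, (E τ * (A * B - B * A) * F τ) i j)
      = Complex.I * ((E t * A * F t - A) i j) := by
    intro i j
    have hder : ∀ τ : ℝ, HasDerivAt (fun τ => (E τ * A * F τ) i j)
        (((-Complex.I) • (E τ * (A * B - B * A) * F τ)) i j) τ := by
      intro τ
      have hcomp := ((((Matrix.entryLinearMap ℂ ℂ i j).toContinuousLinearMap :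
          Matrix (Fin n) (Fin n) ℂ →L[ℂ] ℂ).restrictScalars ℝ).hasFDerivAt
        (x := E τ * A * F τ)).comp_hasDerivAt τ (hkey τ)
      exact hcomp
    have hctse : Continuous fun τ : ℝ =>
        ((-Complex.I) • (E τ * (A * B - B * A) * F τ)) i j := by
      simp only [Matrix.smul_apply, smul_eq_mul]
      exact continuous_const.mul (hcont.matrix_elem i j)
    have hftc := intervalIntegral.integral_eq_sub_of_hasDerivAt
      (f := fun τ => (E τ * A * F τ) i j) (fun τ _ => hder τ)
      (hctse.intervalIntegrable 0 t)
    have h0 : E 0 * A * F 0 = A := by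
      simp [hE, hF, exp_zero]
    have hpull : (∫ τ in (0:ℝ)..t, ((-Complex.I) • (E τ * (A * B - B * A) * F τ)) i j)
        = (-Complex.I) * ∫ τ in (0:ℝ)..t, (E τ * (A * B - B * A) * F τ) i j := by
      simp_rw [Matrix.smul_apply, smul_eq_mul]
      exact intervalIntegral.integral_const_mul _ _
    rw [hpull] at hftc
    have hval : (-Complex.I) * ∫ τ in (0:ℝ)..t, (E τ * (A * B - B * A) * F τ) i j
        = (E t * A * F t) i j - A i j := by
      simpa [h0] using hftc
    rw [Matrix.sub_apply, ← hval, ← mul_assoc, mul_neg, Complex.I_mul_I, neg_neg, one_mul]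
  -- assemble
  have hFE : F t * E t = 1 := by
    show exp ((-(Complex.I * (t : ℂ))) • B) * exp ((Complex.I * (t : ℂ)) • B) = 1
    rw [← Matrix.exp_add_of_commute _ _ (((Commute.refl B).smul_left _).smul_right _)]
    have hz : (-(Complex.I * (t : ℂ))) • B + (Complex.I * (t : ℂ)) • B = 0 := by
      rw [← add_smul]; simp
    rw [hz, exp_zero]
  have hOf : (Matrix.of (fun i j => ∫ τ in (0 : ℝ)..t,
      (exp ((Complex.I * (τ : ℂ)) • B) * (A * B - B * A) *
        exp ((-(Complex.I * (τ : ℂ))) • B)) i j))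
      = Complex.I • (E t * A * F t - A) := by
    ext i j
    simpa [hE, hF, neg_smul] using hint i j
  rw [hOf]
  rw [show NormedSpace.exp ((-(Complex.I * (t : ℂ))) • B) = F t from rfl]
  rw [mul_smul_comm, smul_smul, neg_mul, Complex.I_mul_I, neg_neg, one_smul, mul_sub]
  simp only [← mul_assoc]
  rw [hFE, one_mul]
end
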